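/- Let f : ℝⁿ → ℝ be differentiable, coordinatewise L-smooth for some L ∈ ℝⁿ with all entries Lᵢ > 0, and bounded below by f* ∈ ℝ (f(x) ≥ f* for all x). Let θ(t), t = 0, …, T, be generated by the stochastic MTSL iteration from a deterministic initial point θ(0), satisfying for every t ∈ {0,…,T−1}: unbiasedness E[g̃(t) | ℱ_t] = ∇f(θ(t)) almost surely and second-moment bound E[‖g̃(t)‖²] ≤ G². Assume f(θ(t)) and ‖∇f(θ(t))‖² are integrable for all t, and write L_max = maxᵢ Lᵢ. Then Σ_{t=0}^{T−1} η_min(t) E[ ‖∇f(θ(t))‖² ] ≤ f(θ(0)) − f* + (L_max G² / 2) Σ_{t=0}^{T−1} η_max(t)². -/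

import Mathlib

open MeasureTheory Finset

/-- Component of a pi-valued conditional expectation. -/
lemma condexp_pi_apply_aux {Ω : Type*} {m m0 : MeasurableSpace Ω} {μ : Measure Ω}
    [IsFiniteMeasure μ] (hm : m ≤ m0) {n : ℕ} {g : Ω → Fin n → ℝ}
    (hg : Integrable g μ) (i : Fin n) :
    μ[(fun ω => g ω i)|m] =ᵐ[μ] fun ω => (μ[g|m]) ω i := by
  symm
  refine ae_eq_condExp_of_forall_setIntegral_eq hm
    ((ContinuousLinearMap.proj (R := ℝ) (φ := fun _ : Fin n => ℝ) i).integrable_comp hg)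
    (fun s _ _ => ((ContinuousLinearMap.proj (R := ℝ) (φ := fun _ : Fin n => ℝ) i).integrable_comp
      integrable_condExp).integrableOn)
    (fun s hs hμs => ?_)
    (StronglyMeasurable.aestronglyMeasurable
      ((ContinuousLinearMap.proj (R := ℝ)
        (φ := fun _ : Fin n => ℝ) i).continuous.comp_stronglyMeasurable
        stronglyMeasurable_condExp))
  have h1 := ContinuousLinearMap.integral_comp_comm
    (ContinuousLinearMap.proj (R := ℝ) (φ := fun _ : Fin n => ℝ) i)
    (integrable_condExp (f := g) (m := m)).integrableOn (μ := μ.restrict s)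
  have h2 := ContinuousLinearMap.integral_comp_comm
    (ContinuousLinearMap.proj (R := ℝ) (φ := fun _ : Fin n => ℝ) i)
    hg.integrableOn (μ := μ.restrict s)
  simp only [ContinuousLinearMap.proj_apply] at h1 h2
  rw [h1, h2, setIntegral_condExp hm hg hs]

/-- The `i`-th partial derivative of `f : ℝⁿ → ℝ` at `x`. -/
noncomputable def pderiv' {n : ℕ} (f : (Fin n → ℝ) → ℝ) (i : Fin n) (x : Fin n → ℝ) : ℝ :=
  fderiv ℝ f x (Pi.single i 1)

/-- Summed descent bound for the stochastic MTSL iteration on a differentiable,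
coordinatewise `L`-smooth `f` bounded below by `f*`, with unbiased gradient estimates and
second-moment bound `E‖g̃(t)‖² ≤ G²`:
`Σ_{t<T} η_min(t) E‖∇f(θ(t))‖² ≤ f(θ(0)) − f* + (L_max G²/2) Σ_{t<T} η_max(t)²`. -/
theorem mtsl_sgd_nonconvex_sum {n : ℕ} [NeZero n] {Ω : Type*} {m0 : MeasurableSpace Ω}
    (μ : Measure Ω) [IsProbabilityMeasure μ]
    (𝓕 : Filtration ℕ m0)
    (f : (Fin n → ℝ) → ℝ) (L : Fin n → ℝ)
    (hdiff : Differentiable ℝ f)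
    (hL : ∀ i, 0 < L i)
    (hsmooth : ∀ x y : Fin n → ℝ,
      f y ≤ f x + (∑ i, pderiv' f i x * (y i - x i)) + (1 / 2) * ∑ i, L i * (y i - x i) ^ 2)
    (fstar : ℝ) (hbdd : ∀ x, fstar ≤ f x)
    (η : ℕ → Fin n → ℝ) (hη : ∀ t i, 0 < η t i)
    (G : ℝ) (T : ℕ) (hT : 1 ≤ T)
    (θ : ℕ → Ω → Fin n → ℝ) (gt : ℕ → Ω → Fin n → ℝ)
    (θinit : Fin n → ℝ) (hθ0 : ∀ ω, θ 0 ω = θinit)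
    (hadapted : Adapted 𝓕 θ)
    (hupdate : ∀ t ω, θ (t + 1) ω = fun i => θ t ω i - η t i * gt t ω i)
    (hgt2 : ∀ t, MemLp (gt t) 2 μ)
    (hunbiased : ∀ t < T, μ[gt t | 𝓕 t] =ᵐ[μ] fun ω => fun i => pderiv' f i (θ t ω))
    (hG : ∀ t < T, ∫ ω, ∑ i, (gt t ω i) ^ 2 ∂μ ≤ G ^ 2)
    (hfint : ∀ t, Integrable (fun ω => f (θ t ω)) μ)
    (hgradint : ∀ t, Integrable (fun ω => ∑ i, (pderiv' f i (θ t ω)) ^ 2) μ) :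
    ∑ t ∈ Finset.range T,
        (Finset.univ.inf' Finset.univ_nonempty (η t)) *
          ∫ ω, ∑ i, (pderiv' f i (θ t ω)) ^ 2 ∂μ ≤
      f θinit - fstar
        + ((Finset.univ.sup' Finset.univ_nonempty L) * G ^ 2 / 2) *
            ∑ t ∈ Finset.range T, (Finset.univ.sup' Finset.univ_nonempty (η t)) ^ 2 := by
  set Lmax : ℝ := Finset.univ.sup' Finset.univ_nonempty L with hLmax
  set A : ℕ → ℝ := fun t => ∫ ω, f (θ t ω) ∂μ with hA
  set B : ℕ → ℝ := fun t => ∫ ω, ∑ i, (pderiv' f i (θ t ω)) ^ 2 ∂μ with hB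
  have hLmax0 : 0 ≤ Lmax := (hL ⟨0, Nat.pos_of_ne_zero (NeZero.ne n)⟩).le.trans
    (Finset.le_sup' L (mem_univ _))
  -- per-step bound
  have step : ∀ t < T,
      (Finset.univ.inf' Finset.univ_nonempty (η t)) * B t ≤
        A t - A (t + 1) + (Lmax * G ^ 2 / 2) *
          (Finset.univ.sup' Finset.univ_nonempty (η t)) ^ 2 := by
    intro t ht
    set ηmin : ℝ := Finset.univ.inf' Finset.univ_nonempty (η t)
    set ηmax : ℝ := Finset.univ.sup' Finset.univ_nonempty (η t) with hηmax
    have hηmax0 : 0 ≤ ηmax := (hη t ⟨0, Nat.pos_of_ne_zero (NeZero.ne n)⟩).le.trans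
      (Finset.le_sup' (η t) (mem_univ _))
    -- measurability of the gradient coordinates
    have hXsm : ∀ i : Fin n, StronglyMeasurable[𝓕 t] (fun ω => pderiv' f i (θ t ω)) :=
      fun i => ((measurable_fderiv_apply_const ℝ f (Pi.single i 1)).comp
        (hadapted t)).stronglyMeasurable
    have hXsm0 : ∀ i : Fin n, StronglyMeasurable (fun ω => pderiv' f i (θ t ω)) :=
      fun i => (hXsm i).mono (𝓕.le t)
    -- each squared coordinate of the gradient is integrable
    have hXsq : ∀ i : Fin n, Integrable (fun ω => (pderiv' f i (θ t ω)) ^ 2) μ := by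
      intro i
      refine Integrable.mono' (hgradint t) ((hXsm0 i).pow 2).aestronglyMeasurable
        (Filter.Eventually.of_forall fun ω => ?_)
      rw [Real.norm_eq_abs, abs_of_nonneg (sq_nonneg _)]
      exact Finset.single_le_sum (f := fun j => (pderiv' f j (θ t ω)) ^ 2)
        (fun j _ => sq_nonneg _) (mem_univ i)
    have hX2 : ∀ i : Fin n, MemLp (fun ω => pderiv' f i (θ t ω)) 2 μ :=
      fun i => (memLp_two_iff_integrable_sq (hXsm0 i).aestronglyMeasurable).2 (hXsq i)
    have hgi2 : ∀ i : Fin n, MemLp (fun ω => gt t ω i) 2 μ :=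
      fun i => (ContinuousLinearMap.proj (R := ℝ) (φ := fun _ : Fin n => ℝ) i).comp_memLp'
        (hgt2 t)
    have hgi_int : ∀ i : Fin n, Integrable (fun ω => gt t ω i) μ :=
      fun i => (hgi2 i).integrable one_le_two
    have hgsq : ∀ i : Fin n, Integrable (fun ω => (gt t ω i) ^ 2) μ :=
      fun i => (hgi2 i).integrable_sq
    have hprod : ∀ i : Fin n, Integrable (fun ω => pderiv' f i (θ t ω) * gt t ω i) μ :=
      fun i => memLp_one_iff_integrable.mp
        ((hgi2 i).smul (r := 1) (hX2 i) (hpqr := ⟨by simp [one_div, ENNReal.inv_two_add_inv_two]⟩))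
    -- conditional expectation of each coordinate
    have hcond : ∀ i : Fin n,
        μ[(fun ω => gt t ω i)|𝓕 t] =ᵐ[μ] fun ω => pderiv' f i (θ t ω) := by
      intro i
      refine (condexp_pi_apply_aux (𝓕.le t) ((hgt2 t).integrable one_le_two) i).trans ?_
      filter_upwards [hunbiased t ht] with ω hω
      rw [hω]
    -- key identity : E[∂ᵢf(θt)·g̃ᵢ] = E[∂ᵢf(θt)²]
    have hkey : ∀ i : Fin n,
        ∫ ω, pderiv' f i (θ t ω) * gt t ω i ∂μ = ∫ ω, (pderiv' f i (θ t ω)) ^ 2 ∂μ := by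
      intro i
      have hpull := condExp_mul_of_stronglyMeasurable_left (m := 𝓕 t) (μ := μ) (hXsm i)
        (hprod i) (hgi_int i)
      calc ∫ ω, pderiv' f i (θ t ω) * gt t ω i ∂μ
          = ∫ ω, (μ[(fun ω => pderiv' f i (θ t ω)) * (fun ω => gt t ω i)|𝓕 t]) ω ∂μ :=
            (integral_condExp (𝓕.le t)).symm
        _ = ∫ ω, pderiv' f i (θ t ω) * (μ[(fun ω => gt t ω i)|𝓕 t]) ω ∂μ :=
            integral_congr_ae (hpull.mono fun ω hω => hω)
        _ = ∫ ω, (pderiv' f i (θ t ω)) ^ 2 ∂μ := by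
            refine integral_congr_ae ?_
            filter_upwards [hcond i] with ω hω
            rw [hω, sq]
    -- pointwise descent inequality
    have hpt : ∀ ω, f (θ (t + 1) ω) ≤
        f (θ t ω) + (∑ i, -(η t i * (pderiv' f i (θ t ω) * gt t ω i)))
          + (1 / 2) * ∑ i, (L i * η t i ^ 2) * (gt t ω i) ^ 2 := by
      intro ω
      refine (hsmooth (θ t ω) (θ (t + 1) ω)).trans_eq ?_
      simp only [hupdate t ω]
      congr 1
      · congr 1
        exact Finset.sum_congr rfl fun i _ => by ring
      · congr 1
        exact Finset.sum_congr rfl fun i _ => by ring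
    -- integrability of the pieces
    have hI2 : Integrable (fun ω => ∑ i, -(η t i * (pderiv' f i (θ t ω) * gt t ω i))) μ :=
      integrable_finset_sum _ fun i _ => (show Integrable
        (fun ω => -(η t i * (pderiv' f i (θ t ω) * gt t ω i))) μ from
          ((hprod i).const_mul (η t i)).neg)
    have hI3 : Integrable (fun ω => (1 / 2 : ℝ) * ∑ i, (L i * η t i ^ 2) * (gt t ω i) ^ 2) μ :=
      (integrable_finset_sum _ fun i _ => (hgsq i).const_mul _).const_mul _
    -- integrate the descent inequality
    have hI12 : Integrable (fun ω => f (θ t ω)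
        + ∑ i, -(η t i * (pderiv' f i (θ t ω) * gt t ω i))) μ := (hfint t).add hI2
    have hRHS : Integrable (fun ω => f (θ t ω)
        + ∑ i, -(η t i * (pderiv' f i (θ t ω) * gt t ω i))
        + (1 / 2 : ℝ) * ∑ i, (L i * η t i ^ 2) * (gt t ω i) ^ 2) μ := hI12.add hI3
    have hint : A (t + 1) ≤
        A t + (∑ i, -(η t i * ∫ ω, pderiv' f i (θ t ω) * gt t ω i ∂μ))
          + (1 / 2) * ∑ i, (L i * η t i ^ 2) * ∫ ω, (gt t ω i) ^ 2 ∂μ := by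
      have hmono := integral_mono (μ := μ) (hfint (t + 1)) hRHS fun ω => hpt ω
      calc A (t + 1) ≤ _ := hmono
        _ = _ := by
          rw [integral_add hI12 hI3, integral_add (hfint t) hI2,
            integral_finset_sum _ (fun i _ => (show Integrable
              (fun ω => -(η t i * (pderiv' f i (θ t ω) * gt t ω i))) μ from
                ((hprod i).const_mul (η t i)).neg)),
            integral_const_mul, integral_finset_sum _ (fun i _ => (hgsq i).const_mul _)]
          simp only [integral_neg, integral_const_mul]
          rfl
    -- rewrite with the key identity
    have hint2 : A (t + 1) ≤
        A t - (∑ i, η t i * ∫ ω, (pderiv' f i (θ t ω)) ^ 2 ∂μ)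
          + (1 / 2) * ∑ i, (L i * η t i ^ 2) * ∫ ω, (gt t ω i) ^ 2 ∂μ := by
      refine hint.trans_eq ?_
      congr 1
      rw [sub_eq_add_neg, ← Finset.sum_neg_distrib]
      congr 1
      exact Finset.sum_congr rfl fun i _ => by rw [hkey i]
    -- lower bound on the sum of gradient-square integrals
    have hBsum : B t = ∑ i, ∫ ω, (pderiv' f i (θ t ω)) ^ 2 ∂μ :=
      integral_finset_sum _ fun i _ => hXsq i
    have hb1 : ηmin * B t ≤ ∑ i, η t i * ∫ ω, (pderiv' f i (θ t ω)) ^ 2 ∂μ := by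
      rw [hBsum, Finset.mul_sum]
      exact Finset.sum_le_sum fun i _ => mul_le_mul_of_nonneg_right
        (Finset.inf'_le (η t) (mem_univ i)) (integral_nonneg fun ω => sq_nonneg _)
    -- upper bound on the noise term
    have hb2 : (1 / 2 : ℝ) * ∑ i, (L i * η t i ^ 2) * ∫ ω, (gt t ω i) ^ 2 ∂μ ≤
        Lmax * G ^ 2 / 2 * ηmax ^ 2 := by
      have hsum : ∑ i, (L i * η t i ^ 2) * ∫ ω, (gt t ω i) ^ 2 ∂μ ≤
          (Lmax * ηmax ^ 2) * ∑ i, ∫ ω, (gt t ω i) ^ 2 ∂μ := by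
        rw [Finset.mul_sum]
        refine Finset.sum_le_sum fun i _ => mul_le_mul_of_nonneg_right ?_
          (integral_nonneg fun ω => sq_nonneg _)
        exact mul_le_mul (Finset.le_sup' L (mem_univ i))
          (pow_le_pow_left₀ (hη t i).le (Finset.le_sup' (η t) (mem_univ i)) 2)
          (sq_nonneg _) hLmax0
      have hGsum : ∑ i, ∫ ω, (gt t ω i) ^ 2 ∂μ ≤ G ^ 2 := by
        rw [← integral_finset_sum _ fun i _ => hgsq i]
        exact hG t ht
      have h3 : (Lmax * ηmax ^ 2) * ∑ i, ∫ ω, (gt t ω i) ^ 2 ∂μ ≤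
          (Lmax * ηmax ^ 2) * G ^ 2 :=
        mul_le_mul_of_nonneg_left hGsum (mul_nonneg hLmax0 (sq_nonneg _))
      nlinarith [hsum, h3]
    have hsum_le : ∑ i, η t i * ∫ ω, (pderiv' f i (θ t ω)) ^ 2 ∂μ ≤
        A t - A (t + 1) + (1 / 2 : ℝ) * ∑ i, (L i * η t i ^ 2) * ∫ ω, (gt t ω i) ^ 2 ∂μ := by
      linarith [hint2]
    calc ηmin * B t ≤ _ := hb1
      _ ≤ _ := hsum_le
      _ ≤ A t - A (t + 1) + Lmax * G ^ 2 / 2 * ηmax ^ 2 := by linarith [hb2]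
  -- sum up
  have hsum : ∑ t ∈ Finset.range T,
      (Finset.univ.inf' Finset.univ_nonempty (η t)) * B t ≤
        (A 0 - A T) + (Lmax * G ^ 2 / 2) *
          ∑ t ∈ Finset.range T, (Finset.univ.sup' Finset.univ_nonempty (η t)) ^ 2 := by
    calc ∑ t ∈ Finset.range T, (Finset.univ.inf' Finset.univ_nonempty (η t)) * B t
        ≤ ∑ t ∈ Finset.range T, (A t - A (t + 1) + (Lmax * G ^ 2 / 2) *
            (Finset.univ.sup' Finset.univ_nonempty (η t)) ^ 2) :=
          Finset.sum_le_sum fun t ht => step t (Finset.mem_range.mp ht)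
      _ = _ := by
          rw [Finset.sum_add_distrib, Finset.sum_range_sub' A, ← Finset.mul_sum]
  have hA0 : A 0 = f θinit := by
    simp only [hA]
    have : (fun ω => f (θ 0 ω)) = fun _ : Ω => f θinit := funext fun ω => by rw [hθ0]
    rw [this, integral_const]
    simp
  have hAT : fstar ≤ A T := by
    have : fstar = ∫ _ : Ω, fstar ∂μ := by rw [integral_const]; simp
    rw [this]
    exact integral_mono (integrable_const _) (hfint T) fun ω => hbdd _
  calc ∑ t ∈ Finset.range T,
        (Finset.univ.inf' Finset.univ_nonempty (η t)) *
          ∫ ω, ∑ i, (pderiv' f i (θ t ω)) ^ 2 ∂μ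
      ≤ (A 0 - A T) + (Lmax * G ^ 2 / 2) *
          ∑ t ∈ Finset.range T, (Finset.univ.sup' Finset.univ_nonempty (η t)) ^ 2 := hsum
    _ ≤ _ := by rw [hA0]; linarith [hAT]
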